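/- Let n = r₁ + ⋯ + r_d with each r_j ≥ 1 and let R_j = {0}^{r₁+⋯+r_{j−1}} × ℝ^{r_j} × {0}^{r_{j+1}+⋯+r_d} be the j-th coordinate block of ℝ^n; let p̂_j denote the orthogonal projection onto ⊕_{i≠j} R_i. Let J ⊆ {1,…,d} be nonempty and let F be a subspace of ℝ^n with dim(F) < #J. Then there exists j ∈ J such that for all X ∈ F, ‖p̂_j(X)‖ ≥ ‖X‖/√(n²+1). -/

import Mathlib

noncomputable section

open Finset

/-- Coordinate `i` of `ℝⁿ` (with `n = r₀ + ⋯ + r_{d−1}`) belongs to the `j`-th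
coordinate block. -/
def InBlock {d : ℕ} (r : Fin d → ℕ) (j : Fin d) (i : ℕ) : Prop :=
  (∑ l ∈ Finset.univ.filter (fun l => l < j), r l) ≤ i ∧
    i < ∑ l ∈ Finset.univ.filter (fun l => l ≤ j), r l

instance {d : ℕ} (r : Fin d → ℕ) (j : Fin d) (i : ℕ) : Decidable (InBlock r j i) :=
  inferInstanceAs (Decidable (_ ∧ _))

/-- The orthogonal projection `p̂_j` of `ℝⁿ` onto the sum of all coordinate blocks other
than the `j`-th: it sets to zero the coordinates of the `j`-th block. -/
def projHat (n d : ℕ) (r : Fin d → ℕ) (j : Fin d) (x : EuclideanSpace ℝ (Fin n)) :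
    EuclideanSpace ℝ (Fin n) :=
  WithLp.toLp 2 (fun i : Fin n => if InBlock r j (i : ℕ) then 0 else x i)

namespace Statement13Aux

/-- The complementary projection: onto the `j`-th block. -/
def blk (n d : ℕ) (r : Fin d → ℕ) (j : Fin d) (x : EuclideanSpace ℝ (Fin n)) :
    EuclideanSpace ℝ (Fin n) :=
  WithLp.toLp 2 (fun i : Fin n => if InBlock r j (i : ℕ) then x i else 0)

lemma norm_sq_eq {n : ℕ} (x : EuclideanSpace ℝ (Fin n)) : ‖x‖ ^ 2 = ∑ i, x i ^ 2 := by
  rw [EuclideanSpace.norm_eq, Real.sq_sqrt (by positivity)]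
  simp [sq_abs]

lemma pythag {n d : ℕ} (r : Fin d → ℕ) (j : Fin d) (x : EuclideanSpace ℝ (Fin n)) :
    ‖x‖ ^ 2 = ‖projHat n d r j x‖ ^ 2 + ‖blk n d r j x‖ ^ 2 := by
  simp only [norm_sq_eq, ← Finset.sum_add_distrib]
  refine Finset.sum_congr rfl fun i _ => ?_
  by_cases h : InBlock r j (i : ℕ) <;> simp [projHat, blk, h]

lemma not_inBlock {d : ℕ} {r : Fin d → ℕ} {j l : Fin d} (hjl : j ≠ l) {i : ℕ}
    (h : InBlock r j i) : ¬ InBlock r l i := by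
  intro h'
  rcases lt_or_gt_of_ne hjl with hlt | hlt
  · have hs : (∑ k ∈ Finset.univ.filter (fun k => k ≤ j), r k)
        ≤ ∑ k ∈ Finset.univ.filter (fun k => k < l), r k := by
      refine Finset.sum_le_sum_of_subset ?_
      intro k hk
      simp only [Finset.mem_filter, Finset.mem_univ, true_and] at *
      exact lt_of_le_of_lt hk hlt
    exact Nat.lt_irrefl i (((h.2.trans_le hs).trans_le h'.1))
  · have hs : (∑ k ∈ Finset.univ.filter (fun k => k ≤ l), r k)
        ≤ ∑ k ∈ Finset.univ.filter (fun k => k < j), r k := by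
      refine Finset.sum_le_sum_of_subset ?_
      intro k hk
      simp only [Finset.mem_filter, Finset.mem_univ, true_and] at *
      exact lt_of_le_of_lt hk hlt
    exact Nat.lt_irrefl i (((h'.2.trans_le hs).trans_le h.1))

lemma norm_le_norm {n : ℕ} (a b : EuclideanSpace ℝ (Fin n)) (h : ∀ i, |a i| ≤ |b i|) :
    ‖a‖ ≤ ‖b‖ := by
  rw [EuclideanSpace.norm_eq, EuclideanSpace.norm_eq]
  apply Real.sqrt_le_sqrt
  refine Finset.sum_le_sum fun i _ => ?_
  simp only [Real.norm_eq_abs]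
  exact pow_le_pow_left₀ (abs_nonneg _) (h i) 2

lemma blk_norm_le {n d : ℕ} {r : Fin d → ℕ} {j l : Fin d} (hjl : j ≠ l)
    (x : EuclideanSpace ℝ (Fin n)) :
    ‖blk n d r j x‖ ≤ ‖projHat n d r l x‖ := by
  apply norm_le_norm
  intro i
  by_cases h : InBlock r j (i : ℕ)
  · have h' := not_inBlock hjl h
    simp [blk, projHat, h, h']
  · simp [blk, projHat, h]

/-- `blk` as a linear map. -/
def blkL (n d : ℕ) (r : Fin d → ℕ) (j : Fin d) :
    EuclideanSpace ℝ (Fin n) →ₗ[ℝ] EuclideanSpace ℝ (Fin n) where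
  toFun := blk n d r j
  map_add' x y := by
    ext i
    by_cases h : InBlock r j (i : ℕ) <;> simp [blk, h]
  map_smul' c x := by
    ext i
    by_cases h : InBlock r j (i : ℕ) <;> simp [blk, h]

@[simp] lemma blk_zero {n d : ℕ} (r : Fin d → ℕ) (j : Fin d) :
    blk n d r j (0 : EuclideanSpace ℝ (Fin n)) = 0 := by
  ext i
  by_cases h : InBlock r j (i : ℕ) <;> simp [blk, h]

@[simp] lemma blkL_apply {n d : ℕ} (r : Fin d → ℕ) (j : Fin d)
    (x : EuclideanSpace ℝ (Fin n)) : blkL n d r j x = blk n d r j x := rfl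

lemma projHat_smul {n d : ℕ} (r : Fin d → ℕ) (j : Fin d) (c : ℝ)
    (x : EuclideanSpace ℝ (Fin n)) :
    projHat n d r j (c • x) = c • projHat n d r j x := by
  ext i
  by_cases h : InBlock r j (i : ℕ) <;> simp [projHat, h]

end Statement13Aux

open Statement13Aux in
/-- If `F` is a subspace of `ℝⁿ` with `dim F < #J`, there is `j ∈ J` such
that `‖p̂_j(X)‖ ≥ ‖X‖/√(n²+1)` for all `X ∈ F`. -/
theorem statement13 (d n : ℕ) (r : Fin d → ℕ) (hr : ∀ j, 1 ≤ r j) (hn : n = ∑ j, r j)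
    (J : Finset (Fin d)) (hJ : J.Nonempty)
    (F : Submodule ℝ (EuclideanSpace ℝ (Fin n)))
    (hF : Module.finrank ℝ F < J.card) :
    ∃ j ∈ J, ∀ X ∈ F,
      ‖X‖ / Real.sqrt ((n : ℝ) ^ 2 + 1) ≤ ‖projHat n d r j X‖ := by
  by_contra hcon
  push_neg at hcon
  set c : ℝ := 1 / Real.sqrt ((n : ℝ) ^ 2 + 1) with hc
  have hsq : (0:ℝ) < (n : ℝ) ^ 2 + 1 := by positivity
  have hsqrt : 0 < Real.sqrt ((n : ℝ) ^ 2 + 1) := Real.sqrt_pos.2 hsq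
  have hc0 : 0 < c := by positivity
  have hc2 : c ^ 2 = 1 / ((n : ℝ) ^ 2 + 1) := by
    rw [hc, div_pow, Real.sq_sqrt hsq.le, one_pow]
  have hd : 0 < d := by
    obtain ⟨j0, _⟩ := hJ
    exact j0.pos
  have hdn : d ≤ n := by
    rw [hn]
    calc d = ∑ _j : Fin d, 1 := by simp
      _ ≤ ∑ j, r j := Finset.sum_le_sum fun j _ => hr j
  have hJd : J.card ≤ d := by
    simpa using Finset.card_le_card (Finset.subset_univ J)
  -- choose unit vectors
  have hexists : ∀ j : {j // j ∈ J}, ∃ v : EuclideanSpace ℝ (Fin n),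
      v ∈ F ∧ ‖v‖ = 1 ∧ ‖projHat n d r (j : Fin d) v‖ < c := by
    rintro ⟨j, hj⟩
    obtain ⟨X, hXF, hX⟩ := hcon j hj
    have hX0 : X ≠ 0 := by
      rintro rfl
      rw [norm_zero, zero_div] at hX
      exact absurd hX (norm_nonneg _).not_gt
    have hXn : (0:ℝ) < ‖X‖ := norm_pos_iff.2 hX0
    refine ⟨‖X‖⁻¹ • X, F.smul_mem _ hXF, ?_, ?_⟩
    · rw [norm_smul, norm_inv, norm_norm, inv_mul_cancel₀ hXn.ne']
    · rw [projHat_smul, norm_smul, norm_inv, norm_norm]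
      have : ‖X‖⁻¹ * ‖projHat n d r j X‖ < ‖X‖⁻¹ * (‖X‖ * c) :=
        mul_lt_mul_of_pos_left (by rw [hc]; linarith [hX, (div_eq_mul_one_div ‖X‖ (Real.sqrt ((n : ℝ) ^ 2 + 1))) ]) (inv_pos.2 hXn)
      calc ‖X‖⁻¹ * ‖projHat n d r j X‖ < ‖X‖⁻¹ * (‖X‖ * c) := this
        _ = c := by field_simp
  choose v hvF hv1 hvp using hexists
  -- key lower bound on block norms
  have hQ : ∀ j : {j // j ∈ J}, (n : ℝ) * c < ‖blk n d r (j : Fin d) (v j)‖ := by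
    intro j
    have hp := pythag r (j : Fin d) (v j)
    rw [hv1 j] at hp
    have h1 : ‖projHat n d r (j : Fin d) (v j)‖ ^ 2 < c ^ 2 :=
      pow_lt_pow_left₀ (hvp j) (norm_nonneg _) (by norm_num)
    have h2 : ((n : ℝ) * c) ^ 2 < ‖blk n d r (j : Fin d) (v j)‖ ^ 2 := by
      have heq : ((n : ℝ) * c) ^ 2 = (n : ℝ) ^ 2 * (1 / ((n : ℝ) ^ 2 + 1)) := by
        rw [mul_pow, hc2]
      have key : (n : ℝ) ^ 2 * (1 / ((n : ℝ) ^ 2 + 1)) + 1 / ((n : ℝ) ^ 2 + 1) = 1 := by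
        field_simp
      rw [hc2] at h1
      linarith
    exact lt_of_pow_lt_pow_left₀ 2 (norm_nonneg _) h2
  -- linear independence
  have hli : LinearIndependent ℝ v := by
    rw [linearIndependent_iff']
    intro s g hsum i hi
    obtain ⟨j, hjs, hjmax⟩ := Finset.exists_max_image s (fun l => |g l|) ⟨i, hi⟩
    have hgj : g j = 0 := by
      by_contra hgj
      have hgj0 : 0 < |g j| := abs_pos.2 hgj
      have h0 : ∑ l ∈ s, g l • blk n d r (j : Fin d) (v l) = 0 := by
        have h := congrArg (blkL n d r (j : Fin d)) hsum
        simpa [map_sum, map_smul] using h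
      have heq : g j • blk n d r (j : Fin d) (v j)
          = -∑ l ∈ s.erase j, g l • blk n d r (j : Fin d) (v l) := by
        rw [eq_neg_iff_add_eq_zero, add_comm, Finset.sum_erase_add s _ hjs]
        exact h0
      have hbound : ‖g j • blk n d r (j : Fin d) (v j)‖
          ≤ ((s.card : ℝ) - 1) * (|g j| * c) := by
        rw [heq, norm_neg]
        calc ‖∑ l ∈ s.erase j, g l • blk n d r (j : Fin d) (v l)‖
            ≤ ∑ l ∈ s.erase j, ‖g l • blk n d r (j : Fin d) (v l)‖ := norm_sum_le _ _
          _ ≤ ∑ _l ∈ s.erase j, |g j| * c := by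
              refine Finset.sum_le_sum fun l hl => ?_
              have hlj : l ≠ j := Finset.ne_of_mem_erase hl
              have hls : l ∈ s := Finset.mem_of_mem_erase hl
              rw [norm_smul, Real.norm_eq_abs]
              have hne : (j : Fin d) ≠ (l : Fin d) := fun h => hlj (Subtype.ext h.symm)
              have h1 : ‖blk n d r (j : Fin d) (v l)‖ ≤ ‖projHat n d r (l : Fin d) (v l)‖ :=
                blk_norm_le hne (v l)
              have h2 : ‖blk n d r (j : Fin d) (v l)‖ ≤ c := h1.trans (hvp l).le
              exact mul_le_mul (hjmax l hls) h2 (norm_nonneg _) (abs_nonneg _)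
          _ = ((s.erase j).card : ℝ) * (|g j| * c) := by
              rw [Finset.sum_const, nsmul_eq_mul]
          _ = ((s.card : ℝ) - 1) * (|g j| * c) := by
              rw [Finset.card_erase_of_mem hjs]
              have h1 : 1 ≤ s.card := Finset.card_pos.2 ⟨j, hjs⟩
              have : ((s.card - 1 : ℕ) : ℝ) = (s.card : ℝ) - 1 := by
                push_cast [h1]
                ring
              rw [this]
      have hlow : |g j| * ((n : ℝ) * c) < ‖g j • blk n d r (j : Fin d) (v j)‖ := by
        rw [norm_smul, Real.norm_eq_abs]
        exact mul_lt_mul_of_pos_left (hQ j) hgj0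
      have hcard : (s.card : ℝ) ≤ (n : ℝ) := by
        have h1 : s.card ≤ Fintype.card {j // j ∈ J} := Finset.card_le_univ s
        have h2 : Fintype.card {j // j ∈ J} = J.card := Fintype.card_coe J
        have : s.card ≤ n := by omega
        exact_mod_cast this
      nlinarith [mul_pos hgj0 hc0]
    have hgi := hjmax i hi
    rw [hgj] at hgi
    simpa using le_antisymm (by simpa using hgi) (abs_nonneg (g i))
  -- contradiction with finrank
  have : J.card ≤ Module.finrank ℝ F := by
    set w : {j // j ∈ J} → F := fun j => ⟨v j, hvF j⟩ with hw
    have hcomp : v = F.subtype ∘ w := rfl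
    rw [hcomp] at hli
    have hli' : LinearIndependent ℝ w := LinearIndependent.of_comp F.subtype hli
    have := hli'.fintype_card_le_finrank
    simpa [Fintype.card_coe] using this
  omega
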